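/- If Φ is an infinitely divisible quantum channel (for every n there is a channel Φₙ with Φₙⁿ = Φ), then its peripheral channel satisfies Φ_P = (Φ_{n,P})ⁿ for all n, where Φ_P = 𝒫_P ∘ Φ and Φ_{n,P} = 𝒫_{P,n} ∘ Φₙ. -/

import Mathlib

open Matrix
open scoped ComplexOrder

/-- The algebra of `d × d` complex matrices. -/
abbrev Mat (d : ℕ) := Matrix (Fin d) (Fin d) ℂ

/-- A linear map on matrices is positive if it maps positive semidefinite matrices to
positive semidefinite matrices. -/
def IsPositiveMap {d : ℕ} (Φ : Module.End ℂ (Mat d)) : Prop :=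
  ∀ X : Mat d, X.PosSemidef → (Φ X).PosSemidef

/-- A linear map on matrices is trace-preserving. -/
def IsTracePreserving {d : ℕ} (Φ : Module.End ℂ (Mat d)) : Prop :=
  ∀ X : Mat d, (Φ X).trace = X.trace

/-- The block-wise application `(Φ ⊗ id_n)(X)` of `Φ` to a matrix on `ℂ^d ⊗ ℂ^n`. -/
def blockApply {d : ℕ} (Φ : Module.End ℂ (Mat d)) (n : ℕ)
    (X : Matrix (Fin d × Fin n) (Fin d × Fin n) ℂ) :
    Matrix (Fin d × Fin n) (Fin d × Fin n) ℂ :=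
  Matrix.of fun p q => Φ (Matrix.of fun i j => X (i, p.2) (j, q.2)) p.1 q.1

/-- Complete positivity: `Φ ⊗ id_n` is positive for every `n`. -/
def IsCompletelyPositive {d : ℕ} (Φ : Module.End ℂ (Mat d)) : Prop :=
  ∀ (n : ℕ) (X : Matrix (Fin d × Fin n) (Fin d × Fin n) ℂ),
    X.PosSemidef → (blockApply Φ n X).PosSemidef

/-- The attractor (peripheral) subspace: the span of eigenvectors corresponding to
eigenvalues of modulus one. -/
noncomputable def attrSubspace {d : ℕ} (Φ : Module.End ℂ (Mat d)) : Submodule ℂ (Mat d) :=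
  ⨆ (μ : ℂ) (_ : ‖μ‖ = 1), Module.End.eigenspace Φ μ

/-- The peripheral eigenprojection of `Φ`: the spectral projection whose range is the
attractor subspace and whose kernel is the sum of the generalized eigenspaces for the
non-peripheral eigenvalues. -/
def IsPeriphProj {d : ℕ} (Φ Q : Module.End ℂ (Mat d)) : Prop :=
  Q ∘ₗ Q = Q ∧
  LinearMap.range Q = attrSubspace Φ ∧
  LinearMap.ker Q =
    ⨆ (μ : ℂ) (_ : ‖μ‖ ≠ 1), Module.End.maxGenEigenspace Φ μ

section AuxLemmas

variable {R M : Type*} [CommRing R] [AddCommGroup M] [Module R M]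

lemma idem_fix {Q : Module.End R M} (hQ : Q ∘ₗ Q = Q) {x : M}
    (hx : x ∈ LinearMap.range Q) : Q x = x := by
  obtain ⟨y, rfl⟩ := hx
  exact DFunLike.congr_fun hQ y

lemma sub_mem_ker {Q : Module.End R M} (hQ : Q ∘ₗ Q = Q) (x : M) :
    x - Q x ∈ LinearMap.ker Q := by
  simp only [LinearMap.mem_ker, map_sub]
  rw [show Q (Q x) = (Q ∘ₗ Q) x from rfl, hQ, sub_self]

/-- Two idempotents with range/ker inclusions are equal. -/
lemma idem_eq_of_le {Q Q' : Module.End R M} (hQ : Q ∘ₗ Q = Q) (hQ' : Q' ∘ₗ Q' = Q')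
    (hr : LinearMap.range Q' ≤ LinearMap.range Q)
    (hk : LinearMap.ker Q' ≤ LinearMap.ker Q) : Q = Q' := by
  ext x
  have h1 : Q (x - Q' x) = 0 := hk (sub_mem_ker hQ' x)
  have h2 : Q (Q' x) = Q' x := idem_fix hQ (hr (LinearMap.mem_range_self Q' x))
  have : Q x = Q (Q' x) + Q (x - Q' x) := by rw [← map_add]; congr 1; abel
  rw [this, h1, h2, add_zero]

lemma eig_pow {f : Module.End R M} {μ : R} {x : M} (h : x ∈ Module.End.eigenspace f μ)
    (n : ℕ) : x ∈ Module.End.eigenspace (f ^ n) (μ ^ n) := by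
  rw [Module.End.mem_eigenspace_iff] at h ⊢
  induction n with
  | zero => simp
  | succ k ih =>
    rw [pow_succ, pow_succ, Module.End.mul_apply, h, _root_.map_smul, ih, smul_smul, mul_comm]

lemma maxgen_pow {f : Module.End R M} {μ : R} {x : M}
    (h : x ∈ Module.End.maxGenEigenspace f μ) (n : ℕ) :
    x ∈ Module.End.maxGenEigenspace (f ^ n) (μ ^ n) := by
  rw [Module.End.mem_maxGenEigenspace] at h ⊢
  obtain ⟨k, hk⟩ := h
  refine ⟨k, ?_⟩
  set a : Module.End R M := f
  set b : Module.End R M := μ • 1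
  have hab : Commute a b := (Commute.one_right a).smul_right μ
  have hbn : (μ ^ n) • (1 : Module.End R M) = b ^ n := by
    simp [b, smul_pow]
  set s : Module.End R M := ∑ i ∈ Finset.range n, a ^ i * b ^ (n - 1 - i)
  have hs : s * (a - b) = a ^ n - b ^ n := hab.geom_sum₂_mul n
  have hcs : Commute (a - b) s := by
    refine Commute.sum_right _ _ _ fun i _ => ?_
    have ca : Commute (a - b) a := ((Commute.refl a).sub_right hab).symm
    have cb : Commute (a - b) b := (Commute.one_right (a - b)).smul_right μ
    exact (ca.pow_right i).mul_right (cb.pow_right _)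
  have : (a ^ n - b ^ n) ^ k = s ^ k * (a - b) ^ k := by
    rw [← hs, (hcs.symm.mul_pow k)]
  rw [hbn, this, Module.End.mul_apply, show ((a - b) ^ k) x = 0 from hk, map_zero]

lemma pow_idem {Q : Module.End R M} (hQ : Q ∘ₗ Q = Q) : ∀ n : ℕ, Q ^ (n + 1) = Q := by
  intro n
  induction n with
  | zero => simp
  | succ k ih => rw [pow_succ, ih]; exact hQ

/-- Invariance of a sup of invariant submodules indexed by a predicate. -/
lemma sup_inv {p : R → Prop} {f : Module.End R M} (T : R → Submodule R M)
    (hT : ∀ μ, Submodule.map f (T μ) ≤ T μ) :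
    Submodule.map f (⨆ (μ : R) (_ : p μ), T μ) ≤ ⨆ (μ : R) (_ : p μ), T μ := by
  rw [Submodule.map_iSup]
  refine iSup_le fun μ => ?_
  rw [Submodule.map_iSup]
  refine iSup_le fun hμ => le_trans (hT μ)
    (le_iSup₂ (f := fun μ (_ : p μ) => T μ) μ hμ)

lemma eig_inv (f : Module.End R M) (μ : R) :
    Submodule.map f (Module.End.eigenspace f μ) ≤ Module.End.eigenspace f μ := by
  rintro _ ⟨x, hx, rfl⟩
  rw [SetLike.mem_coe] at hx
  rw [Module.End.mem_eigenspace_iff] at hx ⊢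
  rw [hx, _root_.map_smul, hx]

lemma maxgen_inv (f : Module.End R M) (μ : R) :
    Submodule.map f (Module.End.maxGenEigenspace f μ) ≤ Module.End.maxGenEigenspace f μ := by
  rintro _ ⟨x, hx, rfl⟩
  rw [SetLike.mem_coe] at hx
  rw [Module.End.mem_maxGenEigenspace] at hx ⊢
  obtain ⟨k, hk⟩ := hx
  refine ⟨k, ?_⟩
  have hc : (f - μ • 1) ^ k * f = f * (f - μ • 1) ^ k := by
    have : Commute f (f - μ • 1) :=
      (Commute.refl f).sub_right ((Commute.one_right f).smul_right μ)
    exact (this.symm.pow_left k)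
  calc ((f - μ • 1) ^ k) (f x) = ((f - μ • 1) ^ k * f) x := rfl
    _ = (f * (f - μ • 1) ^ k) x := by rw [hc]
    _ = f (((f - μ • 1) ^ k) x) := rfl
    _ = 0 := by rw [hk, map_zero]

/-- An idempotent whose range and kernel are `f`-invariant commutes with `f`. -/
lemma comm_of_invariant {Q f : Module.End R M} (hQ : Q ∘ₗ Q = Q)
    (hrange : ∀ x ∈ LinearMap.range Q, f x ∈ LinearMap.range Q)
    (hker : ∀ x ∈ LinearMap.ker Q, f x ∈ LinearMap.ker Q) :
    Q * f = f * Q := by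
  ext x
  have h1 : Q (f (Q x)) = f (Q x) :=
    idem_fix hQ (hrange _ (LinearMap.mem_range_self Q x))
  have h2 : Q (f (x - Q x)) = 0 := hker _ (sub_mem_ker hQ x)
  have hx : Q (f x) = Q (f (Q x)) + Q (f (x - Q x)) := by
    rw [← map_add, ← map_add]; congr 2; abel
  calc (Q * f) x = Q (f x) := rfl
    _ = f (Q x) := by rw [hx, h1, h2, add_zero]
    _ = (f * Q) x := rfl

end AuxLemmas

/-- If `Φ` is an infinitely divisible quantum channel, then its
peripheral channel `Φ_P = P_P ∘ Φ` satisfies `Φ_P = (Φ_{n,P})ⁿ` for every `n ≥ 1` and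
every `n`-th root channel `Φₙ` of `Φ`, where `Φ_{n,P} = P_{P,n} ∘ Φₙ`. -/
theorem peripheral_channel_of_infinitely_divisible
    (d : ℕ) (Φ : Module.End ℂ (Mat d))
    (hCP : IsCompletelyPositive Φ) (hTP : IsTracePreserving Φ)
    (hdiv : ∀ n : ℕ, 0 < n → ∃ Φn : Module.End ℂ (Mat d),
      IsCompletelyPositive Φn ∧ IsTracePreserving Φn ∧ Φn ^ n = Φ) :
    ∀ n : ℕ, 0 < n → ∀ Φn : Module.End ℂ (Mat d),
      IsCompletelyPositive Φn → IsTracePreserving Φn → Φn ^ n = Φ →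
      ∀ Pp Ppn : Module.End ℂ (Mat d),
        IsPeriphProj Φ Pp → IsPeriphProj Φn Ppn →
        Pp * Φ = (Ppn * Φn) ^ n := by
  intro n hn Φn _ _ hpow Pp Ppn hPp hPpn
  obtain ⟨hP2, hPr, hPk⟩ := hPp
  obtain ⟨hN2, hNr, hNk⟩ := hPpn
  have hn0 : n ≠ 0 := hn.ne'
  -- range inclusion
  have hr : LinearMap.range Ppn ≤ LinearMap.range Pp := by
    rw [hPr, hNr, attrSubspace, attrSubspace]
    refine iSup₂_le fun μ hμ => ?_
    have hμn : ‖μ ^ n‖ = 1 := by rw [norm_pow, hμ, one_pow]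
    refine le_trans ?_
      (le_iSup₂ (f := fun μ (_ : ‖μ‖ = 1) => Module.End.eigenspace Φ μ) (μ ^ n) hμn)
    intro x hx
    rw [← hpow]
    exact eig_pow hx n
  -- kernel inclusion
  have hk : LinearMap.ker Ppn ≤ LinearMap.ker Pp := by
    rw [hPk, hNk]
    refine iSup₂_le fun μ hμ => ?_
    have hμn : ‖μ ^ n‖ ≠ 1 := by
      rw [norm_pow]; intro h; apply hμ
      rcases lt_trichotomy (‖μ‖) 1 with h1 | h1 | h1
      · have := pow_lt_one₀ (norm_nonneg μ) h1 hn0; linarith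
      · exact h1
      · have := one_lt_pow₀ h1 hn0; linarith
    refine le_trans ?_
      (le_iSup₂ (f := fun μ (_ : ‖μ‖ ≠ 1) => Module.End.maxGenEigenspace Φ μ)
        (μ ^ n) hμn)
    intro x hx
    rw [← hpow]
    exact maxgen_pow hx n
  have hPeq : Pp = Ppn := idem_eq_of_le hP2 hN2 hr hk
  -- Ppn commutes with Φn
  have hcomm : Ppn * Φn = Φn * Ppn := by
    refine comm_of_invariant hN2 ?_ ?_
    · intro x hx
      rw [hNr, attrSubspace] at hx ⊢
      exact sup_inv _ (fun μ => eig_inv Φn μ) (Submodule.mem_map_of_mem hx)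
    · intro x hx
      rw [hNk] at hx ⊢
      exact sup_inv _ (fun μ => maxgen_inv Φn μ) (Submodule.mem_map_of_mem hx)
  have hmulpow : (Ppn * Φn) ^ n = Ppn ^ n * Φn ^ n := (Commute.mul_pow hcomm n)
  obtain ⟨m, rfl⟩ := Nat.exists_eq_succ_of_ne_zero hn0
  rw [hmulpow, pow_idem hN2 m, hpow, hPeq]
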